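/- Let a_0,…,a_n be positive integers with gcd(a_0,…,a_n) = 1, and let g := gcd(a_0,…,a_k) for some 0 ≤ k < n. Then F(a_0,…,a_n) ≤ F^g(a_0,…,a_k) + F(a_{k+1},…,a_n,g) + g. -/
import Mathlib


open Finset

/-- The amplitude `δ` of the (sub)pair given by the degrees `d` indexed by `D`
and the weights `a` indexed by `A`. -/
def deltaOn {ι κ : Type*} (D : Finset ι) (d : ι → ℕ) (A : Finset κ) (a : κ → ℕ) : ℤ :=
  (∑ j ∈ D, (d j : ℤ)) - ∑ i ∈ A, (a i : ℤ)

/-- The amplitude of a full pair `(d;a)`. -/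
def deltaPair {ι κ : Type*} [Fintype ι] [Fintype κ] (d : ι → ℕ) (a : κ → ℕ) : ℤ :=
  deltaOn univ d univ a

/-- `h`-regularity of the (sub)pair given by the degrees `d` indexed by `D` and the
weights `a` indexed by `A`: for every nonempty subset `I ⊆ A` of the weight indices with
`a_I := gcd_{i ∈ I} a i > 1`, either there are `|I|` pairwise distinct degree indices
`p ∈ D` with `a_I ∣ d p`, or `a_I ∣ h`. -/
def IsHRegularOn {ι κ : Type*} (h : ℕ) (D : Finset ι) (d : ι → ℕ)
    (A : Finset κ) (a : κ → ℕ) : Prop :=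
  ∀ I : Finset κ, I ⊆ A → I.Nonempty → 1 < I.gcd a →
    (∃ P : Finset ι, P ⊆ D ∧ P.card = I.card ∧ ∀ j ∈ P, I.gcd a ∣ d j) ∨ I.gcd a ∣ h

/-- `h`-regularity of a full pair `(d;a)`. -/
def IsHRegularPair {ι κ : Type*} [Fintype ι] [Fintype κ] (h : ℕ) (d : ι → ℕ)
    (a : κ → ℕ) : Prop :=
  IsHRegularOn h univ d univ a

/-- The generalised `1/h`-Frobenius number `F^h` of the weights indexed by `A`.
Letting `g` be the gcd of the weights, this is the largest integer `z` divisible by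
`lcm g h` that is not a nonnegative integral combination of the weights; this agrees
with the renormalised definition `F^h = g * F^{h / gcd (g,h)} (a/g)`.  For `g = 1`
it is the largest multiple of `h` that is not a nonnegative integral combination of
the weights (so it equals `-h` if every positive multiple of `h` is such a combination),
and `frobOn 1 A a` is the ordinary Frobenius number `F` (so `F = -1` if some weight
equals `1`). -/
noncomputable def frobOn {κ : Type*} (h : ℕ) (A : Finset κ) (a : κ → ℕ) : ℤ :=
  sSup {z : ℤ | ((Nat.lcm (A.gcd a) h : ℕ) : ℤ) ∣ z ∧
    ¬ ∃ x : κ → ℕ, ((∑ i ∈ A, x i * a i : ℕ) : ℤ) = z}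

/-- The generalised `1/h`-Frobenius number `F^h` of a full tuple of weights. -/
noncomputable def frobNum {κ : Type*} [Fintype κ] (h : ℕ) (a : κ → ℕ) : ℤ :=
  frobOn h univ a

lemma bezout_finset {κ : Type*} [DecidableEq κ] (a : κ → ℕ) (A : Finset κ) :
    ∃ c : κ → ℤ, ∑ i ∈ A, c i * a i = ((A.gcd a : ℕ) : ℤ) := by
  induction A using Finset.induction_on with
  | empty => exact ⟨0, by simp⟩
  | @insert j s hj ih =>
    obtain ⟨c, hc⟩ := ih
    refine ⟨fun i => if i = j then Nat.gcdA (a j) (s.gcd a)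
      else Nat.gcdB (a j) (s.gcd a) * c i, ?_⟩
    rw [Finset.sum_insert hj, Finset.gcd_insert]
    have h2 : ∑ i ∈ s, (if i = j then Nat.gcdA (a j) (s.gcd a)
        else Nat.gcdB (a j) (s.gcd a) * c i) * (a i : ℤ)
        = Nat.gcdB (a j) (s.gcd a) * ∑ i ∈ s, c i * a i := by
      rw [Finset.mul_sum]
      refine Finset.sum_congr rfl fun i hi => ?_
      rw [if_neg (fun h : i = j => hj (h ▸ hi))]; ring
    rw [h2, hc]
    beta_reduce
    rw [if_pos rfl]
    have : (gcd (a j) (s.gcd a) : ℕ) = Nat.gcd (a j) (s.gcd a) := rfl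
    rw [this, Nat.gcd_eq_gcd_ab]
    ring

lemma rep_of_big {κ : Type*} [DecidableEq κ] (a : κ → ℕ) (A : Finset κ)
    (hA : A.Nonempty) (ha : ∀ i ∈ A, 0 < a i) :
    ∃ M : ℤ, ∀ z : ℤ, M ≤ z → ((A.gcd a : ℕ) : ℤ) ∣ z →
      ∃ x : κ → ℕ, ((∑ i ∈ A, x i * a i : ℕ) : ℤ) = z := by
  obtain ⟨i0, hi0⟩ := hA
  obtain ⟨c, hc⟩ := bezout_finset a A
  have hPpos : (0 : ℤ) < (a i0 : ℤ) := by exact_mod_cast ha i0 hi0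
  have hS : (0:ℤ) < ∑ i ∈ A, (a i : ℤ) := by
    refine Finset.sum_pos' (fun i hi => by positivity) ⟨i0, hi0, hPpos⟩
  refine ⟨(a i0 : ℤ) * ∑ i ∈ A, (a i : ℤ), fun z hz hdvd => ?_⟩
  obtain ⟨m, hm⟩ := hdvd
  set y : κ → ℤ := fun i => m * c i with hy
  have hzrep : ∑ i ∈ A, y i * (a i : ℤ) = z := by
    simp only [hy, mul_assoc]
    rw [← Finset.mul_sum, hc, hm]; ring
  set P : ℤ := (a i0 : ℤ) with hP
  set w : κ → ℤ := fun i => y i % P with hwdef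
  have hw0 : ∀ i, 0 ≤ w i := fun i => Int.emod_nonneg _ hPpos.ne'
  have hwP : ∀ i, w i ≤ P - 1 := fun i => by
    have := Int.emod_lt_of_pos (y i) hPpos; simp only [hwdef]; omega
  set r : ℤ := z - ∑ i ∈ A.erase i0, w i * (a i : ℤ) with hrdef
  have hsum_le : ∑ i ∈ A.erase i0, w i * (a i:ℤ) ≤ (P - 1) * ∑ i ∈ A, (a i:ℤ) := by
    rw [Finset.mul_sum]
    calc ∑ i ∈ A.erase i0, w i * (a i:ℤ) ≤ ∑ i ∈ A.erase i0, (P-1) * (a i:ℤ) :=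
          Finset.sum_le_sum fun i hi => mul_le_mul_of_nonneg_right (hwP i) (by positivity)
      _ ≤ ∑ i ∈ A, (P-1) * (a i:ℤ) :=
          Finset.sum_le_sum_of_subset_of_nonneg (Finset.erase_subset _ _)
            (fun i hi _ => mul_nonneg (by linarith) (by positivity))
  have hr0 : 0 ≤ r := by
    have h1 : (P - 1) * ∑ i ∈ A, (a i:ℤ) = P * ∑ i ∈ A, (a i:ℤ) - ∑ i ∈ A, (a i:ℤ) := by ring
    simp only [hrdef]
    linarith
  have hsplit : y i0 * (a i0:ℤ) + ∑ i ∈ A.erase i0, y i * (a i:ℤ) = z := by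
    rw [Finset.add_sum_erase A (fun i => y i * (a i:ℤ)) hi0]; exact hzrep
  have hdvdterm : ∀ i, P ∣ (y i - w i) := fun i =>
    ⟨y i / P, by simp only [hwdef]; rw [Int.emod_def]; ring⟩
  have hdvdr : P ∣ r := by
    have h3 : r = y i0 * P + ∑ i ∈ A.erase i0, (y i - w i) * (a i:ℤ) := by
      simp only [sub_mul, Finset.sum_sub_distrib, hrdef]
      rw [← hsplit, hP]; ring
    rw [h3]
    exact dvd_add (Dvd.intro_left _ rfl)
      (Finset.dvd_sum fun i _ => ((hdvdterm i).mul_right _))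
  set q : ℤ := r / P with hqdef
  have hq : P * q = r := Int.mul_ediv_cancel' hdvdr
  have hq0 : 0 ≤ q := Int.ediv_nonneg hr0 hPpos.le
  refine ⟨fun i => if i = i0 then q.toNat else (w i).toNat, ?_⟩
  push_cast
  rw [← Finset.add_sum_erase _ _ hi0]
  beta_reduce
  rw [if_pos rfl]
  have hxB : ∑ i ∈ A.erase i0, (if i = i0 then (q.toNat:ℤ) else ((w i).toNat:ℤ)) * (a i:ℤ)
      = ∑ i ∈ A.erase i0, w i * (a i:ℤ) := by
    refine Finset.sum_congr rfl fun i hi => ?_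
    rw [if_neg (Finset.ne_of_mem_erase hi), Int.toNat_of_nonneg (hw0 i)]
  rw [hxB, Int.toNat_of_nonneg hq0, ← hP]
  linear_combination hq + hrdef

lemma frobOn_spec {κ : Type*} [DecidableEq κ] (h : ℕ) (A : Finset κ) (a : κ → ℕ)
    (hA : A.Nonempty) (ha : ∀ i ∈ A, 0 < a i) (hh : 0 < h) :
    (((Nat.lcm (A.gcd a) h : ℕ) : ℤ) ∣ frobOn h A a
      ∧ ¬ ∃ x : κ → ℕ, ((∑ i ∈ A, x i * a i : ℕ) : ℤ) = frobOn h A a)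
    ∧ ∀ z : ℤ, ((Nat.lcm (A.gcd a) h : ℕ) : ℤ) ∣ z →
        (¬ ∃ x : κ → ℕ, ((∑ i ∈ A, x i * a i : ℕ) : ℤ) = z) → z ≤ frobOn h A a := by
  obtain ⟨M, hM⟩ := rep_of_big a A hA ha
  set S : Set ℤ := {z : ℤ | ((Nat.lcm (A.gcd a) h : ℕ) : ℤ) ∣ z ∧
    ¬ ∃ x : κ → ℕ, ((∑ i ∈ A, x i * a i : ℕ) : ℤ) = z} with hSdef
  have hfrob : frobOn h A a = sSup S := rfl
  have hgpos : 0 < A.gcd a := by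
    rcases Nat.eq_zero_or_pos (A.gcd a) with h0 | h0
    · obtain ⟨i0, hi0⟩ := hA
      have := (Finset.gcd_eq_zero_iff.mp h0) i0 hi0
      exact absurd this (ha i0 hi0).ne'
    · exact h0
  have hlpos : 0 < Nat.lcm (A.gcd a) h := Nat.pos_of_ne_zero
    (Nat.lcm_ne_zero hgpos.ne' hh.ne')
  have hne : S.Nonempty := by
    refine ⟨-(Nat.lcm (A.gcd a) h : ℤ), dvd_neg.mpr dvd_rfl, ?_⟩
    rintro ⟨x, hx⟩
    have h1 : (0:ℤ) ≤ ((∑ i ∈ A, x i * a i : ℕ) : ℤ) := Int.natCast_nonneg _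
    have h2 : (0:ℤ) < (Nat.lcm (A.gcd a) h : ℤ) := by exact_mod_cast hlpos
    omega
  have hbdd : BddAbove S := by
    refine ⟨M, fun z hz => ?_⟩
    by_contra hcon
    push_neg at hcon
    obtain ⟨hdvd, hnrep⟩ := hz
    have hgd : ((A.gcd a : ℕ) : ℤ) ∣ z :=
      dvd_trans (by exact_mod_cast Nat.dvd_lcm_left _ _) hdvd
    exact hnrep (hM z hcon.le hgd)
  have hmem := Int.csSup_mem hne hbdd
  rw [← hfrob] at hmem
  exact ⟨hmem, fun z h1 h2 => hfrob ▸ le_csSup hbdd ⟨h1, h2⟩⟩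


/-- **Lemma (recursive bound on Frobenius numbers).**
Let `a₀,…,aₙ` be coprime positive integers and `g := gcd(a₀,…,a_k)` for some
`0 ≤ k < n`.  Then `F(a₀,…,aₙ) ≤ F^g(a₀,…,a_k) + F(a_{k+1},…,aₙ,g) + g`. -/
theorem frobenius_recursive_bound (n k : ℕ) (hk : k < n)
    (a : Fin (n + 1) → ℕ) (ha : ∀ i, 0 < a i)
    (hcop : Finset.univ.gcd a = 1)
    (g : ℕ) (hg : g = (Finset.univ.filter (fun i : Fin (n + 1) => (i : ℕ) ≤ k)).gcd a) :
    frobNum 1 a ≤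
      frobOn g (Finset.univ.filter (fun i : Fin (n + 1) => (i : ℕ) ≤ k)) a
      + frobOn 1
          (insert (none : Option (Fin (n + 1)))
            ((Finset.univ.filter (fun i : Fin (n + 1) => k < (i : ℕ))).image some))
          (fun o => o.elim g a)
      + (g : ℤ) := by
  classical
  set A : Finset (Fin (n+1)) := Finset.univ.filter (fun i => (i:ℕ) ≤ k) with hAdef
  set B : Finset (Fin (n+1)) := Finset.univ.filter (fun i => k < (i:ℕ)) with hBdef
  have hAne : A.Nonempty := ⟨⟨0, Nat.succ_pos n⟩, by simp [hAdef]⟩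
  have hBne : B.Nonempty := ⟨⟨n, n.lt_succ_self⟩, by simp [hBdef, hk]⟩
  have hgpos : 0 < g := by
    rw [hg]
    rcases Nat.eq_zero_or_pos (A.gcd a) with h0 | h0
    · obtain ⟨i0, hi0⟩ := hAne
      exact absurd (Finset.gcd_eq_zero_iff.mp h0 i0 hi0) (ha i0).ne'
    · exact h0
  have hdisj : Disjoint A B := by
    rw [Finset.disjoint_left]
    intro i hiA hiB
    rw [hAdef, Finset.mem_filter] at hiA
    rw [hBdef, Finset.mem_filter] at hiB
    omega
  have hunion : A ∪ B = Finset.univ := by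
    ext i
    simp only [hAdef, hBdef, Finset.mem_union, Finset.mem_filter, Finset.mem_univ,
      true_and, iff_true]
    omega
  have hgU : Nat.gcd (A.gcd a) (B.gcd a) = 1 := by
    have h1 := Finset.gcd_union (s₁ := A) (s₂ := B) (f := a)
    rw [hunion, hcop] at h1
    exact h1.symm
  set a2 : Option (Fin (n+1)) → ℕ := fun o => o.elim g a with ha2def
  set A2 : Finset (Option (Fin (n+1))) := insert none (B.image some) with hA2def
  have hnone : (none : Option (Fin (n+1))) ∉ B.image some := by simp
  have hA2ne : A2.Nonempty := ⟨none, by rw [hA2def]; exact Finset.mem_insert_self _ _⟩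
  have ha2pos : ∀ o ∈ A2, 0 < a2 o := by
    intro o ho
    rw [hA2def, Finset.mem_insert] at ho
    rcases ho with rfl | ho
    · exact hgpos
    · obtain ⟨i, _, rfl⟩ := Finset.mem_image.mp ho
      exact ha i
  have hgcd2 : A2.gcd a2 = 1 := by
    rw [hA2def, Finset.gcd_insert, Finset.gcd_image]
    have h1 : a2 ∘ some = a := rfl
    have h2 : a2 none = g := rfl
    rw [h1, h2, hg]
    exact hgU
  have hlcm1 : Nat.lcm (A.gcd a) g = g := by rw [← hg, Nat.lcm_self]
  have hlcm2 : Nat.lcm (A2.gcd a2) 1 = 1 := by rw [hgcd2]; rfl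
  have hlcm3 : Nat.lcm ((Finset.univ : Finset (Fin (n+1))).gcd a) 1 = 1 := by rw [hcop]; rfl
  obtain ⟨⟨hdF1, _⟩, hubF1⟩ := frobOn_spec g A a hAne (fun i _ => ha i) hgpos
  obtain ⟨-, hubF2⟩ := frobOn_spec 1 A2 a2 hA2ne ha2pos one_pos
  obtain ⟨⟨-, hFmem⟩, -⟩ := frobOn_spec 1 (Finset.univ : Finset (Fin (n+1))) a
    Finset.univ_nonempty (fun i _ => ha i) one_pos
  rw [hlcm1] at hdF1 hubF1
  set F1 := frobOn g A a with hF1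
  set F2 := frobOn 1 A2 a2 with hF2
  set z := frobNum 1 a with hzdef
  by_contra hcon
  push_neg at hcon
  have hgz : (0:ℤ) < (g:ℤ) := by exact_mod_cast hgpos
  have hw : F2 < z - F1 - (g:ℤ) := by linarith
  have hrep2 : ∃ x2 : Option (Fin (n+1)) → ℕ,
      ((∑ o ∈ A2, x2 o * a2 o : ℕ):ℤ) = z - F1 - (g:ℤ) := by
    by_contra hne2
    exact absurd (hubF2 _ (by simp [hlcm2]) hne2) (not_le.mpr hw)
  obtain ⟨x2, hx2⟩ := hrep2
  have hx2' : (x2 none : ℤ) * (g:ℤ) + ∑ i ∈ B, (x2 (some i) : ℤ) * (a i:ℤ)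
      = z - F1 - (g:ℤ) := by
    rw [← hx2]
    push_cast
    rw [hA2def, Finset.sum_insert hnone,
      Finset.sum_image (fun x _ y _ h => Option.some_injective _ h)]
    simp [ha2def]
  have hdvdt : (g:ℤ) ∣ F1 + ((x2 none : ℤ) + 1) * (g:ℤ) := by
    refine dvd_add ?_ ⟨(x2 none:ℤ)+1, by ring⟩
    exact_mod_cast hdF1
  have ht : F1 < F1 + ((x2 none :ℤ)+1) * (g:ℤ) := by
    have hx0 : (0:ℤ) ≤ (x2 none:ℤ) := Int.natCast_nonneg _
    nlinarith
  have hrep1 : ∃ x1 : Fin (n+1) → ℕ,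
      ((∑ i ∈ A, x1 i * a i : ℕ):ℤ) = F1 + ((x2 none:ℤ)+1)*(g:ℤ) := by
    by_contra hne1
    exact absurd (hubF1 _ hdvdt hne1) (not_le.mpr ht)
  obtain ⟨x1, hx1⟩ := hrep1
  push_cast at hx1
  apply hFmem
  refine ⟨fun i => if (i:ℕ) ≤ k then x1 i else x2 (some i), ?_⟩
  have hzz : frobOn 1 (Finset.univ : Finset (Fin (n+1))) a = z := rfl
  rw [hzz]
  push_cast
  rw [← hunion, Finset.sum_union hdisj]
  have e1 : ∑ i ∈ A, (if (i:ℕ) ≤ k then (x1 i:ℤ) else (x2 (some i):ℤ)) * (a i:ℤ)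
      = ∑ i ∈ A, (x1 i:ℤ) * (a i:ℤ) := by
    refine Finset.sum_congr rfl fun i hi => ?_
    rw [hAdef, Finset.mem_filter] at hi
    rw [if_pos hi.2]
  have e2 : ∑ i ∈ B, (if (i:ℕ) ≤ k then (x1 i:ℤ) else (x2 (some i):ℤ)) * (a i:ℤ)
      = ∑ i ∈ B, (x2 (some i):ℤ) * (a i:ℤ) := by
    refine Finset.sum_congr rfl fun i hi => ?_
    rw [hBdef, Finset.mem_filter] at hi
    rw [if_neg (by omega)]
  rw [e1, e2, hx1]
  linarith [hx2']
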